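/- The number of crossingless matchings between n left points and n + 2k right points with no left returns and only unnested right returns equals C(n+k, k). -/

import Mathlib

def NCM (N : ℕ) : Type :=
  {f : Fin N → Fin N //
    (∀ i, f (f i) = i) ∧ (∀ i, f i ≠ i) ∧
    (∀ i j : Fin N, i < j → j < f i → f i < f j → False)}

instance (N : ℕ) : Fintype (NCM N) := by unfold NCM; infer_instance


namespace CLMaux

def aS {n k : ℕ} (S : Finset (Fin (n + k))) (j : ℕ) : ℕ :=
  (S.filter (fun x : Fin (n + k) => (x : ℕ) < j)).card

def tS {n k : ℕ} (S : Finset (Fin (n + k))) (j : ℕ) : ℕ :=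
  (Finset.univ.filter (fun x : Fin (n + k) => x ∉ S ∧ (x : ℕ) < j)).card

def posS (n : ℕ) {k : ℕ} (S : Finset (Fin (n + k))) (j : ℕ) : ℕ := n + j + aS S j

theorem aS_mono {n k : ℕ} (S : Finset (Fin (n + k))) {j j' : ℕ} (h : j ≤ j') :
    aS S j ≤ aS S j' := by
  apply Finset.card_le_card
  intro x hx
  simp only [Finset.mem_filter] at *
  exact ⟨hx.1, by omega⟩

theorem aS_succ {n k : ℕ} (S : Finset (Fin (n + k))) {j : ℕ} (hj : j < n + k) :
    aS S (j + 1) = aS S j + (if (⟨j, hj⟩ : Fin (n + k)) ∈ S then 1 else 0) := by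
  unfold aS
  by_cases hmem : (⟨j, hj⟩ : Fin (n + k)) ∈ S
  · rw [if_pos hmem]
    have : S.filter (fun x : Fin (n + k) => (x : ℕ) < j + 1) =
        insert (⟨j, hj⟩ : Fin (n + k)) (S.filter (fun x : Fin (n + k) => (x : ℕ) < j)) := by
      ext x
      simp only [Finset.mem_filter, Finset.mem_insert]
      constructor
      · rintro ⟨hxS, hxlt⟩
        rcases Nat.lt_or_ge (x : ℕ) j with h | h
        · exact Or.inr ⟨hxS, h⟩
        · left; apply Fin.ext; simp; omega
      · rintro (rfl | ⟨hxS, hxlt⟩)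
        · exact ⟨hmem, by simp⟩
        · exact ⟨hxS, by omega⟩
    rw [this, Finset.card_insert_of_notMem (by simp)]
  · rw [if_neg hmem]
    have : S.filter (fun x : Fin (n + k) => (x : ℕ) < j + 1) =
        S.filter (fun x : Fin (n + k) => (x : ℕ) < j) := by
      ext x
      simp only [Finset.mem_filter]
      constructor
      · rintro ⟨hxS, hxlt⟩
        refine ⟨hxS, ?_⟩
        rcases Nat.lt_or_ge (x : ℕ) j with h | h
        · exact h
        · exfalso; apply hmem
          have hx : x = (⟨j, hj⟩ : Fin (n + k)) := by apply Fin.ext; simp; omega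
          rwa [hx] at hxS
      · rintro ⟨hxS, hxlt⟩; exact ⟨hxS, by omega⟩
    rw [this]; omega

theorem aS_add_tS {n k : ℕ} (S : Finset (Fin (n + k))) {j : ℕ} (hj : j ≤ n + k) :
    aS S j + tS S j = j := by
  induction j with
  | zero => simp [aS, tS]
  | succ m ih =>
    have hm : m < n + k := hj
    have h1 := aS_succ S (j := m) hm
    have h2 : tS S (m + 1) = tS S m + (if (⟨m, hm⟩ : Fin (n + k)) ∈ S then 0 else 1) := by
      unfold tS
      by_cases hmem : (⟨m, hm⟩ : Fin (n + k)) ∈ S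
      · rw [if_pos hmem]
        have he : (Finset.univ.filter (fun x : Fin (n + k) => x ∉ S ∧ (x : ℕ) < m + 1)) =
            (Finset.univ.filter (fun x : Fin (n + k) => x ∉ S ∧ (x : ℕ) < m)) := by
          ext x
          simp only [Finset.mem_filter, Finset.mem_univ, true_and]
          constructor
          · rintro ⟨hxS, hxlt⟩
            refine ⟨hxS, ?_⟩
            rcases Nat.lt_or_ge (x : ℕ) m with h | h
            · exact h
            · exfalso; apply hxS
              have hx : x = (⟨m, hm⟩ : Fin (n + k)) := by apply Fin.ext; simp; omega
              rw [hx]; exact hmem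
          · rintro ⟨hxS, hxlt⟩; exact ⟨hxS, by omega⟩
        rw [he]; omega
      · rw [if_neg hmem]
        have he : (Finset.univ.filter (fun x : Fin (n + k) => x ∉ S ∧ (x : ℕ) < m + 1)) =
            insert (⟨m, hm⟩ : Fin (n + k))
              (Finset.univ.filter (fun x : Fin (n + k) => x ∉ S ∧ (x : ℕ) < m)) := by
          ext x
          simp only [Finset.mem_filter, Finset.mem_univ, true_and, Finset.mem_insert]
          constructor
          · rintro ⟨hxS, hxlt⟩
            rcases Nat.lt_or_ge (x : ℕ) m with h | h
            · exact Or.inr ⟨hxS, h⟩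
            · left; apply Fin.ext; simp; omega
          · rintro (rfl | ⟨hxS, hxlt⟩)
            · exact ⟨hmem, by simp⟩
            · exact ⟨hxS, by omega⟩
        rw [he, Finset.card_insert_of_notMem (by simp)]
    have ihm := ih (by omega)
    by_cases hmem : (⟨m, hm⟩ : Fin (n + k)) ∈ S <;> simp [hmem] at h1 h2 ⊢ <;> omega

theorem tS_lt {n k : ℕ} (S : Finset (Fin (n + k))) (hS : S.card = k) {j : Fin (n + k)}
    (hj : j ∉ S) : tS S (j : ℕ) < n := by
  have hsub : insert j (Finset.univ.filter (fun x : Fin (n + k) => x ∉ S ∧ (x : ℕ) < (j : ℕ)))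
      ⊆ Finset.univ.filter (fun x : Fin (n + k) => x ∉ S) := by
    intro x hx
    simp only [Finset.mem_insert, Finset.mem_filter, Finset.mem_univ, true_and] at *
    rcases hx with rfl | hx
    · exact hj
    · exact hx.1
  have hcard : (Finset.univ.filter (fun x : Fin (n + k) => x ∉ S)).card = n := by
    rw [Finset.filter_not, Finset.card_sdiff_of_subset (by simp [Finset.filter_subset])]
    simp only [Finset.filter_univ_mem]
    rw [Finset.card_univ, Fintype.card_fin, hS]
    omega
  have := Finset.card_le_card hsub
  rw [Finset.card_insert_of_notMem (by simp)] at this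
  unfold tS
  omega

theorem aS_le {n k : ℕ} (S : Finset (Fin (n + k))) (j : ℕ) : aS S j ≤ S.card :=
  Finset.card_le_card (Finset.filter_subset _ _)

/-- gap lemma -/
theorem posS_gap {n k : ℕ} (S : Finset (Fin (n + k))) {j1 j2 : Fin (n + k)} (h : j1 < j2) :
    posS n S (j1 : ℕ) + 1 + (if j1 ∈ S then 1 else 0) ≤ posS n S (j2 : ℕ) := by
  have h1 : aS S ((j1 : ℕ) + 1) = aS S (j1 : ℕ) + (if j1 ∈ S then 1 else 0) := aS_succ S j1.isLt
  have h2 : aS S ((j1 : ℕ) + 1) ≤ aS S (j2 : ℕ) := aS_mono S (by exact h)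
  unfold posS
  have : (j1 : ℕ) < (j2 : ℕ) := h
  omega

theorem posS_strictMono {n k : ℕ} (S : Finset (Fin (n + k))) {j1 j2 : Fin (n + k)}
    (h : j1 < j2) : posS n S (j1 : ℕ) < posS n S (j2 : ℕ) := by
  have := posS_gap S h
  omega


def arcl {n k : ℕ} (S : Finset (Fin (n + k))) (j : Fin (n + k)) : ℕ :=
  if j ∈ S then posS n S (j : ℕ) else n - 1 - tS S (j : ℕ)

def arcr {n k : ℕ} (S : Finset (Fin (n + k))) (j : Fin (n + k)) : ℕ :=
  posS n S (j : ℕ) + (if j ∈ S then 1 else 0)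

theorem tS_strict {n k : ℕ} (S : Finset (Fin (n + k))) {j j' : Fin (n + k)}
    (h : j < j') (hj : j ∉ S) : tS S (j : ℕ) < tS S (j' : ℕ) := by
  have hsub : insert j (Finset.univ.filter (fun x : Fin (n + k) => x ∉ S ∧ (x : ℕ) < (j : ℕ)))
      ⊆ Finset.univ.filter (fun x : Fin (n + k) => x ∉ S ∧ (x : ℕ) < (j' : ℕ)) := by
    intro x hx
    simp only [Finset.mem_insert, Finset.mem_filter, Finset.mem_univ, true_and] at *
    rcases hx with rfl | hx
    · exact ⟨hj, h⟩
    · exact ⟨hx.1, by have : (j : ℕ) < (j' : ℕ) := h; omega⟩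
  have := Finset.card_le_card hsub
  rw [Finset.card_insert_of_notMem (by simp)] at this
  unfold tS
  omega

theorem arcr_lt {n k : ℕ} (S : Finset (Fin (n + k))) (hS : S.card = k) (j : Fin (n + k)) :
    arcr S j < n + (n + 2 * k) := by
  have h1 : aS S ((j : ℕ) + 1) = aS S (j : ℕ) + (if j ∈ S then 1 else 0) := by
    have := aS_succ S j.isLt
    simpa using this
  have h2 : aS S ((j : ℕ) + 1) ≤ k := by simpa [hS] using aS_le S ((j : ℕ) + 1)
  have h3 : (j : ℕ) < n + k := j.isLt
  unfold arcr posS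
  omega

theorem n_le_arcr {n k : ℕ} (S : Finset (Fin (n + k))) (j : Fin (n + k)) : n ≤ arcr S j := by
  unfold arcr posS; omega

theorem arcl_mem {n k : ℕ} (S : Finset (Fin (n + k))) {j : Fin (n + k)} (hj : j ∈ S) :
    arcl S j = posS n S (j : ℕ) ∧ arcr S j = posS n S (j : ℕ) + 1 := by
  unfold arcl arcr; rw [if_pos hj, if_pos hj]; exact ⟨rfl, rfl⟩

theorem arcl_not_mem_lt {n k : ℕ} (S : Finset (Fin (n + k))) (hS : S.card = k)
    {j : Fin (n + k)} (hj : j ∉ S) : arcl S j < n := by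
  have := tS_lt S hS hj
  unfold arcl; rw [if_neg hj]; omega

theorem arcl_lt_arcr {n k : ℕ} (S : Finset (Fin (n + k))) (hS : S.card = k) (j : Fin (n + k)) :
    arcl S j < arcr S j := by
  by_cases hj : j ∈ S
  · unfold arcl arcr; rw [if_pos hj, if_pos hj]; omega
  · have := arcl_not_mem_lt S hS hj
    have := n_le_arcr S j
    omega

theorem arcl_ne_arcr {n k : ℕ} (S : Finset (Fin (n + k))) (hS : S.card = k)
    (j j' : Fin (n + k)) : arcl S j ≠ arcr S j' := by
  by_cases hj : j ∈ S
  · rw [(arcl_mem S hj).1]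
    by_cases hj' : j' ∈ S
    · rw [(arcl_mem S hj').2]
      intro h
      rcases lt_trichotomy j j' with hlt | rfl | hlt
      · have := posS_strictMono S hlt; omega
      · omega
      · have := posS_gap S hlt; rw [if_pos hj'] at this; omega
    · unfold arcr; rw [if_neg hj']
      intro h
      simp only [Nat.add_zero] at h
      rcases lt_trichotomy j j' with hlt | rfl | hlt
      · have := posS_strictMono S hlt; omega
      · exact hj' hj
      · have := posS_strictMono S hlt; omega
  · have h1 := arcl_not_mem_lt S hS hj
    have h2 := n_le_arcr S j'
    omega

theorem arcl_inj {n k : ℕ} (S : Finset (Fin (n + k))) (hS : S.card = k)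
    {j j' : Fin (n + k)} (h : arcl S j = arcl S j') : j = j' := by
  by_cases hj : j ∈ S <;> by_cases hj' : j' ∈ S
  · rw [(arcl_mem S hj).1, (arcl_mem S hj').1] at h
    rcases lt_trichotomy j j' with hlt | heq | hlt
    · have := posS_strictMono S hlt; omega
    · exact heq
    · have := posS_strictMono S hlt; omega
  · exfalso
    rw [(arcl_mem S hj).1] at h
    have := arcl_not_mem_lt S hS hj'
    unfold posS at h; omega
  · exfalso
    rw [(arcl_mem S hj').1] at h
    have := arcl_not_mem_lt S hS hj
    unfold posS at h; omega
  · rcases lt_trichotomy j j' with hlt | heq | hlt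
    · exfalso
      have h1 := tS_strict S hlt hj
      have h2 := tS_lt S hS hj'
      unfold arcl at h; rw [if_neg hj, if_neg hj'] at h
      omega
    · exact heq
    · exfalso
      have h1 := tS_strict S hlt hj'
      have h2 := tS_lt S hS hj
      unfold arcl at h; rw [if_neg hj, if_neg hj'] at h
      omega

theorem arcr_strictMono {n k : ℕ} (S : Finset (Fin (n + k))) {j j' : Fin (n + k)}
    (h : j < j') : arcr S j < arcr S j' := by
  have := posS_gap S h
  unfold arcr
  by_cases hj : j ∈ S <;> by_cases hj' : j' ∈ S <;> simp only [hj, hj', if_true, if_false,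
    ite_true, ite_false] at this ⊢ <;> omega

theorem arcr_inj {n k : ℕ} (S : Finset (Fin (n + k))) {j j' : Fin (n + k)}
    (h : arcr S j = arcr S j') : j = j' := by
  rcases lt_trichotomy j j' with hlt | heq | hlt
  · have := arcr_strictMono S hlt; omega
  · exact heq
  · have := arcr_strictMono S hlt; omega

/-- every left point is covered -/
theorem cover_left {n k : ℕ} (S : Finset (Fin (n + k))) (hS : S.card = k)
    {p : ℕ} (hp : p < n) : ∃ j, j ∉ S ∧ arcl S j = p := by
  classical
  set U := (Finset.univ.filter (fun j : Fin (n + k) => j ∉ S)).image (fun j => arcl S j) with hU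
  have hinj : Set.InjOn (fun j => arcl S j)
      ((Finset.univ.filter (fun j : Fin (n + k) => j ∉ S)) : Set (Fin (n + k))) := by
    intro x hx y hy hxy
    exact arcl_inj S hS hxy
  have hcardU : U.card = n := by
    rw [hU, Finset.card_image_of_injOn hinj]
    rw [Finset.filter_not, Finset.card_sdiff_of_subset (by simp [Finset.filter_subset])]
    simp only [Finset.filter_univ_mem]
    rw [Finset.card_univ, Fintype.card_fin, hS]
    omega
  have hsub : U ⊆ Finset.range n := by
    intro x hx
    rw [hU] at hx
    simp only [Finset.mem_image, Finset.mem_filter, Finset.mem_univ, true_and] at hx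
    obtain ⟨j, hj, rfl⟩ := hx
    simp only [Finset.mem_range]
    exact arcl_not_mem_lt S hS hj
  have : U = Finset.range n := Finset.eq_of_subset_of_card_le hsub (by rw [hcardU, Finset.card_range])
  have hpU : p ∈ U := by rw [this]; simpa using hp
  rw [hU] at hpU
  simp only [Finset.mem_image, Finset.mem_filter, Finset.mem_univ, true_and] at hpU
  obtain ⟨j, hj, hjp⟩ := hpU
  exact ⟨j, hj, hjp⟩

/-- every right point is covered -/
theorem cover_right {n k : ℕ} (S : Finset (Fin (n + k))) (hS : S.card = k)
    {p : ℕ} (hn : n ≤ p) (hp : p < n + (n + 2 * k)) :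
    (∃ j, arcr S j = p) ∨ (∃ j ∈ S, arcl S j = p) := by
  classical
  set T := (Finset.univ.image (fun j : Fin (n + k) => arcr S j)) ∪
    (S.image (fun j => arcl S j)) with hT
  have hd : Disjoint (Finset.univ.image (fun j : Fin (n + k) => arcr S j))
      (S.image (fun j => arcl S j)) := by
    rw [Finset.disjoint_left]
    intro a ha hb
    simp only [Finset.mem_image, Finset.mem_univ, true_and] at ha hb
    obtain ⟨j, rfl⟩ := ha
    obtain ⟨j', _, hj'⟩ := hb
    exact arcl_ne_arcr S hS j' j hj'
  have hcard : T.card = n + 2 * k := by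
    rw [hT, Finset.card_union_of_disjoint hd]
    rw [Finset.card_image_of_injOn (fun x _ y _ h => arcr_inj S h),
        Finset.card_image_of_injOn (fun x _ y _ h => arcl_inj S hS h)]
    rw [Finset.card_univ, Fintype.card_fin, hS]
    omega
  have hsub : T ⊆ Finset.Ico n (n + (n + 2 * k)) := by
    intro x hx
    rw [hT] at hx
    simp only [Finset.mem_union, Finset.mem_image, Finset.mem_univ, true_and] at hx
    simp only [Finset.mem_Ico]
    rcases hx with ⟨j, rfl⟩ | ⟨j, hj, rfl⟩
    · exact ⟨n_le_arcr S j, arcr_lt S hS j⟩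
    · rw [(arcl_mem S hj).1]
      constructor
      · unfold posS; omega
      · have h1 := arcl_lt_arcr S hS j
        have h2 := arcr_lt S hS j
        rw [(arcl_mem S hj).1] at h1
        omega
  have : T = Finset.Ico n (n + (n + 2 * k)) :=
    Finset.eq_of_subset_of_card_le hsub (by rw [hcard, Nat.card_Ico]; omega)
  have hpT : p ∈ T := by rw [this]; simp only [Finset.mem_Ico]; omega
  rw [hT] at hpT
  simp only [Finset.mem_union, Finset.mem_image, Finset.mem_univ, true_and] at hpT
  rcases hpT with ⟨j, hj⟩ | ⟨j, hj, hj2⟩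
  · exact Or.inl ⟨j, hj⟩
  · exact Or.inr ⟨j, hj, hj2⟩

def RelS {n k : ℕ} (S : Finset (Fin (n + k))) (p q : ℕ) : Prop :=
  ∃ j, (arcl S j = p ∧ arcr S j = q) ∨ (arcl S j = q ∧ arcr S j = p)

theorem RelS_symm {n k : ℕ} {S : Finset (Fin (n + k))} {p q : ℕ} (h : RelS S p q) :
    RelS S q p := by
  obtain ⟨j, h⟩ := h
  exact ⟨j, h.symm⟩

theorem RelS_uniq {n k : ℕ} {S : Finset (Fin (n + k))} (hS : S.card = k) {p q q' : ℕ}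
    (h : RelS S p q) (h' : RelS S p q') : q = q' := by
  obtain ⟨j, h⟩ := h
  obtain ⟨j', h'⟩ := h'
  rcases h with ⟨h1, h2⟩ | ⟨h1, h2⟩ <;> rcases h' with ⟨h1', h2'⟩ | ⟨h1', h2'⟩
  · have : j = j' := arcl_inj S hS (h1.trans h1'.symm)
    subst this; rw [← h2, ← h2']
  · exact absurd (h1.trans h2'.symm) (arcl_ne_arcr S hS j j')
  · exact absurd (h1'.trans h2.symm) (arcl_ne_arcr S hS j' j)
  · have : j = j' := arcr_inj S (h2.trans h2'.symm)
    subst this; rw [← h1, ← h1']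

theorem RelS_total {n k : ℕ} {S : Finset (Fin (n + k))} (hS : S.card = k) {p : ℕ}
    (hp : p < n + (n + 2 * k)) : ∃ q, RelS S p q := by
  rcases Nat.lt_or_ge p n with hn | hn
  · obtain ⟨j, hj, hjp⟩ := cover_left S hS hn
    exact ⟨arcr S j, j, Or.inl ⟨hjp, rfl⟩⟩
  · rcases cover_right S hS hn hp with ⟨j, hj⟩ | ⟨j, _, hj⟩
    · exact ⟨arcl S j, j, Or.inr ⟨rfl, hj⟩⟩
    · exact ⟨arcr S j, j, Or.inl ⟨hj, rfl⟩⟩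

theorem RelS_lt {n k : ℕ} {S : Finset (Fin (n + k))} (hS : S.card = k) {p q : ℕ}
    (h : RelS S p q) : q < n + (n + 2 * k) := by
  obtain ⟨j, h⟩ := h
  have h1 := arcl_lt_arcr S hS j
  have h2 := arcr_lt S hS j
  rcases h with ⟨_, h⟩ | ⟨h, _⟩ <;> omega

theorem RelS_irrefl {n k : ℕ} {S : Finset (Fin (n + k))} (hS : S.card = k) {p : ℕ}
    (h : RelS S p p) : False := by
  obtain ⟨j, h⟩ := h
  have := arcl_lt_arcr S hS j
  rcases h with ⟨h1, h2⟩ | ⟨h1, h2⟩ <;> omega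

theorem RelS_orient {n k : ℕ} {S : Finset (Fin (n + k))} (hS : S.card = k) {p q : ℕ}
    (h : RelS S p q) (hpq : p < q) : ∃ j, arcl S j = p ∧ arcr S j = q := by
  obtain ⟨j, hj⟩ := h
  rcases hj with h | ⟨h1, h2⟩
  · exact ⟨j, h⟩
  · exfalso; have := arcl_lt_arcr S hS j; omega

noncomputable def fS {n k : ℕ} (S : Finset (Fin (n + k))) (hS : S.card = k) :
    Fin (n + (n + 2 * k)) → Fin (n + (n + 2 * k)) :=
  fun p => ⟨(RelS_total hS p.isLt).choose, RelS_lt hS (RelS_total hS p.isLt).choose_spec⟩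

theorem fS_rel {n k : ℕ} (S : Finset (Fin (n + k))) (hS : S.card = k)
    (p : Fin (n + (n + 2 * k))) : RelS S (p : ℕ) ((fS S hS p : Fin (n + (n + 2 * k))) : ℕ) :=
  (RelS_total hS p.isLt).choose_spec


theorem posS_lt_fin {n k : ℕ} (S : Finset (Fin (n + k))) {j j' : Fin (n + k)}
    (h : posS n S (j : ℕ) < posS n S (j' : ℕ)) : j < j' := by
  rcases lt_trichotomy j j' with hlt | rfl | hlt
  · exact hlt
  · omega
  · exact absurd (posS_strictMono S hlt) (by omega)

theorem fS_invol {n k : ℕ} (S : Finset (Fin (n + k))) (hS : S.card = k)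
    (p : Fin (n + (n + 2 * k))) : fS S hS (fS S hS p) = p := by
  have h1 := fS_rel S hS (fS S hS p)
  have h2 := RelS_symm (fS_rel S hS p)
  exact Fin.ext (RelS_uniq hS h1 h2)

theorem fS_ne {n k : ℕ} (S : Finset (Fin (n + k))) (hS : S.card = k)
    (p : Fin (n + (n + 2 * k))) : fS S hS p ≠ p := by
  intro h
  have h1 := fS_rel S hS p
  rw [h] at h1
  exact RelS_irrefl hS h1

theorem fS_noncross {n k : ℕ} (S : Finset (Fin (n + k))) (hS : S.card = k)
    (i j : Fin (n + (n + 2 * k))) (hij : i < j) (h1 : j < fS S hS i)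
    (h2 : fS S hS i < fS S hS j) : False := by
  rw [Fin.lt_def] at hij h1 h2
  have hi : (i : ℕ) < (fS S hS i : ℕ) := by omega
  have hj : (j : ℕ) < (fS S hS j : ℕ) := by omega
  obtain ⟨j1, hA1, hR1⟩ := RelS_orient hS (fS_rel S hS i) hi
  obtain ⟨j2, hA2, hR2⟩ := RelS_orient hS (fS_rel S hS j) hj
  by_cases m1 : j1 ∈ S <;> by_cases m2 : j2 ∈ S
  · have e1 := arcl_mem S m1
    have e2 := arcl_mem S m2
    have hlt : j1 < j2 := posS_lt_fin S (by omega)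
    have := posS_gap S hlt
    rw [if_pos m1] at this
    omega
  · have e1 := arcl_mem S m1
    have e2 := arcl_not_mem_lt S hS m2
    have : n ≤ posS n S (j1 : ℕ) := by unfold posS; omega
    omega
  · have e2 := arcl_mem S m2
    have hR1' : arcr S j1 = posS n S (j1 : ℕ) := by unfold arcr; rw [if_neg m1]; omega
    have hlt : j2 < j1 := posS_lt_fin S (by omega)
    have := posS_gap S hlt
    rw [if_pos m2] at this
    omega
  · have hA1' : arcl S j1 = n - 1 - tS S (j1 : ℕ) := by unfold arcl; rw [if_neg m1]
    have hA2' : arcl S j2 = n - 1 - tS S (j2 : ℕ) := by unfold arcl; rw [if_neg m2]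
    have hR1' : arcr S j1 = posS n S (j1 : ℕ) := by unfold arcr; rw [if_neg m1]; omega
    have hR2' : arcr S j2 = posS n S (j2 : ℕ) := by unfold arcr; rw [if_neg m2]; omega
    have ht1 := tS_lt S hS m1
    have ht2 := tS_lt S hS m2
    have hlt : j1 < j2 := posS_lt_fin S (by omega)
    have := tS_strict S hlt m1
    omega

theorem fS_left {n k : ℕ} (S : Finset (Fin (n + k))) (hS : S.card = k)
    (p : Fin (n + (n + 2 * k))) (hp : (p : ℕ) < n) : n ≤ (fS S hS p : ℕ) := by
  obtain ⟨j, hj⟩ := fS_rel S hS p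
  rcases hj with ⟨h1, h2⟩ | ⟨h1, h2⟩
  · rw [← h2]; exact n_le_arcr S j
  · exfalso
    have := n_le_arcr S j
    omega

theorem fS_domlike {n k : ℕ} (S : Finset (Fin (n + k))) (hS : S.card = k)
    (p : Fin (n + (n + 2 * k))) (hn : n ≤ (p : ℕ)) (hlt : (p : ℕ) < (fS S hS p : ℕ)) :
    ∃ j ∈ S, arcl S j = (p : ℕ) ∧ (fS S hS p : ℕ) = (p : ℕ) + 1 := by
  obtain ⟨j, hA, hR⟩ := RelS_orient hS (fS_rel S hS p) hlt
  have hjS : j ∈ S := by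
    by_contra hj
    have := arcl_not_mem_lt S hS hj
    omega
  have e := arcl_mem S hjS
  exact ⟨j, hjS, hA, by omega⟩

theorem fS_unnested {n k : ℕ} (S : Finset (Fin (n + k))) (hS : S.card = k)
    (i j : Fin (n + (n + 2 * k))) (hi : n ≤ (i : ℕ)) (hfi : n ≤ (fS S hS i : ℕ))
    (hj : n ≤ (j : ℕ)) (hfj : n ≤ (fS S hS j : ℕ)) (h1 : i < fS S hS i)
    (h2 : j < fS S hS j) (h3 : i < j) (h4 : fS S hS j < fS S hS i) : False := by
  rw [Fin.lt_def] at h1 h2 h3 h4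
  obtain ⟨j1, _, _, e1⟩ := fS_domlike S hS i hi h1
  obtain ⟨j2, _, _, e2⟩ := fS_domlike S hS j hj h2
  omega

/-- domino characterization -/
theorem fS_domino {n k : ℕ} (S : Finset (Fin (n + k))) (hS : S.card = k)
    (p : Fin (n + (n + 2 * k))) (hn : n ≤ (p : ℕ)) :
    (fS S hS p : ℕ) = (p : ℕ) + 1 ↔ ∃ j ∈ S, posS n S (j : ℕ) = (p : ℕ) := by
  constructor
  · intro h
    obtain ⟨j, hjS, hA, _⟩ := fS_domlike S hS p hn (by omega)
    exact ⟨j, hjS, by rw [← (arcl_mem S hjS).1]; exact hA⟩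
  · rintro ⟨j, hjS, hj⟩
    have e := arcl_mem S hjS
    have hrel : RelS S (p : ℕ) ((p : ℕ) + 1) := ⟨j, Or.inl ⟨by omega, by omega⟩⟩
    exact RelS_uniq hS (fS_rel S hS p) hrel

/-- injectivity: the subset is determined by the matching -/
theorem fS_inj {n k : ℕ} (S S' : Finset (Fin (n + k))) (hS : S.card = k) (hS' : S'.card = k)
    (h : fS S hS = fS S' hS') : S = S' := by
  have key : ∀ m : ℕ, ∀ hm : m < n + k, ((⟨m, hm⟩ : Fin (n + k)) ∈ S ↔ (⟨m, hm⟩ : Fin (n + k)) ∈ S') := by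
    intro m
    induction m using Nat.strong_induction_on with
    | _ m ih =>
      intro hm
      have hfilter : S.filter (fun x : Fin (n + k) => (x : ℕ) < m) =
          S'.filter (fun x : Fin (n + k) => (x : ℕ) < m) := by
        ext x
        simp only [Finset.mem_filter]
        constructor
        · rintro ⟨hx, hlt⟩
          refine ⟨?_, hlt⟩
          have := (ih (x : ℕ) hlt x.isLt).mp (by simpa using hx)
          simpa using this
        · rintro ⟨hx, hlt⟩
          refine ⟨?_, hlt⟩
          have := (ih (x : ℕ) hlt x.isLt).mpr (by simpa using hx)
          simpa using this
      have haS : aS S m = aS S' m := by unfold aS; rw [hfilter]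
      set p := posS n S m with hp
      have hpS' : posS n S' m = p := by rw [hp]; unfold posS; rw [haS]
      have hplt : p < n + (n + 2 * k) := by
        have := aS_le S m
        rw [hS] at this
        rw [hp]; unfold posS; omega
      have hpn : n ≤ p := by rw [hp]; unfold posS; omega
      have hiff1 : (⟨m, hm⟩ : Fin (n + k)) ∈ S ↔ ∃ j ∈ S, posS n S (j : ℕ) = p := by
        constructor
        · intro hmem; exact ⟨⟨m, hm⟩, hmem, rfl⟩
        · rintro ⟨j, hjS, hj⟩
          have : j = (⟨m, hm⟩ : Fin (n + k)) := by
            rcases lt_trichotomy j (⟨m, hm⟩ : Fin (n + k)) with hlt | heq | hlt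
            · exact absurd (posS_strictMono S hlt) (by simp only [hp] at hj ⊢; omega)
            · exact heq
            · exact absurd (posS_strictMono S hlt) (by simp only [hp] at hj ⊢; omega)
          rwa [this] at hjS
      have hiff2 : (⟨m, hm⟩ : Fin (n + k)) ∈ S' ↔ ∃ j ∈ S', posS n S' (j : ℕ) = p := by
        constructor
        · intro hmem; exact ⟨⟨m, hm⟩, hmem, by simp [hpS']⟩
        · rintro ⟨j, hjS, hj⟩
          have : j = (⟨m, hm⟩ : Fin (n + k)) := by
            rcases lt_trichotomy j (⟨m, hm⟩ : Fin (n + k)) with hlt | heq | hlt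
            · exact absurd (posS_strictMono S' hlt) (by simp only [hpS'] at hj ⊢; omega)
            · exact heq
            · exact absurd (posS_strictMono S' hlt) (by simp only [hpS'] at hj ⊢; omega)
          rwa [this] at hjS
      rw [hiff1, hiff2]
      rw [← fS_domino S hS ⟨p, hplt⟩ hpn, ← fS_domino S' hS' ⟨p, hplt⟩ hpn, h]
  ext x
  have := key (x : ℕ) x.isLt
  simpa using this


structure Good (n k : ℕ) (f : Fin (n + (n + 2 * k)) → Fin (n + (n + 2 * k))) : Prop where
  invol : ∀ i, f (f i) = i
  nefix : ∀ i, f i ≠ i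
  nc : ∀ i j : Fin (n + (n + 2 * k)), i < j → j < f i → f i < f j → False
  left : ∀ i : Fin (n + (n + 2 * k)), (i : ℕ) < n → n ≤ (f i : ℕ)
  unn : ∀ i j : Fin (n + (n + 2 * k)), n ≤ (i : ℕ) → n ≤ (f i : ℕ) → n ≤ (j : ℕ) → n ≤ (f j : ℕ) →
    i < f i → j < f j → i < j → f j < f i → False

variable {n k : ℕ} {f : Fin (n + (n + 2 * k)) → Fin (n + (n + 2 * k))}

theorem Good.finj (hg : Good n k f) {a b : Fin (n + (n + 2 * k))} (h : f a = f b) : a = b := by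
  rw [← hg.invol a, h, hg.invol]

/-- every right return is adjacent -/
theorem Good.adj (hg : Good n k f) (p : Fin (n + (n + 2 * k))) (hn : n ≤ (p : ℕ))
    (hfn : n ≤ (f p : ℕ)) (hlt : (p : ℕ) < (f p : ℕ)) : (f p : ℕ) = (p : ℕ) + 1 := by
  by_contra hcon
  have h1 : (p : ℕ) + 1 < (f p : ℕ) := by omega
  set q0 : Fin (n + (n + 2 * k)) := ⟨(p : ℕ) + 1, by have := (f p).isLt; omega⟩ with hq0
  have hq0v : (q0 : ℕ) = (p : ℕ) + 1 := rfl
  have hne0 : f q0 ≠ q0 := hg.nefix q0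
  -- f q0 > p
  have hgt : (p : ℕ) < (f q0 : ℕ) := by
    by_contra hle
    push_neg at hle
    rcases Nat.lt_or_ge (f q0 : ℕ) (p : ℕ) with hlt2 | hge
    · -- crossing: f q0 < p < q0 = f (f q0) < f p
      refine hg.nc (f q0) p (by rw [Fin.lt_def]; omega) ?_ ?_
      · rw [hg.invol, Fin.lt_def]; omega
      · rw [hg.invol, Fin.lt_def]; omega
    · have : (f q0 : ℕ) = (p : ℕ) := by omega
      have : f q0 = p := Fin.ext this
      have : q0 = f p := by rw [← this, hg.invol]
      rw [Fin.ext_iff] at this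
      omega
  -- f q0 < f p
  have hlt2 : (f q0 : ℕ) < (f p : ℕ) := by
    rcases Nat.lt_or_ge (f q0 : ℕ) (f p : ℕ) with h | h
    · exact h
    · exfalso
      have hne2 : f q0 ≠ f p := fun he => by
        have := hg.finj he
        rw [Fin.ext_iff] at this
        omega
      have : (f p : ℕ) < (f q0 : ℕ) := by
        rcases Nat.lt_or_ge (f p : ℕ) (f q0 : ℕ) with h2 | h2
        · exact h2
        · exact absurd (Fin.ext (by omega : ((f q0) : ℕ) = ((f p) : ℕ))) hne2
      exact hg.nc p q0 (by rw [Fin.lt_def]; omega) (by rw [Fin.lt_def]; omega)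
        (by rw [Fin.lt_def]; omega)
  have hq0lt : (q0 : ℕ) < (f q0 : ℕ) := by
    rcases Nat.lt_or_ge (q0 : ℕ) (f q0 : ℕ) with h | h
    · exact h
    · exfalso
      have : (f q0 : ℕ) = (q0 : ℕ) := by omega
      exact hne0 (Fin.ext this)
  exact hg.unn p q0 hn hfn (by omega) (by omega) (by rw [Fin.lt_def]; omega)
    (by rw [Fin.lt_def]; exact hq0lt) (by rw [Fin.lt_def]; omega) (by rw [Fin.lt_def]; exact hlt2)

/-- the domino predicate -/
def Dnat (n k : ℕ) (f : Fin (n + (n + 2 * k)) → Fin (n + (n + 2 * k))) (q : ℕ) : Prop :=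
  ∃ p : Fin (n + (n + 2 * k)), (p : ℕ) = q ∧ n ≤ q ∧ (f p : ℕ) = q + 1

theorem Dnat_sparse (hg : Good n k f) {q : ℕ} (h : Dnat n k f q) : ¬ Dnat n k f (q + 1) := by
  obtain ⟨p, hp, hq, hfp⟩ := h
  rintro ⟨p', hp', -, hfp'⟩
  have hpp : f p = p' := Fin.ext (by omega)
  have : f p' = p := by rw [← hpp, hg.invol]
  rw [Fin.ext_iff] at this
  omega

open Classical in
noncomputable def walk (n k : ℕ) (f : Fin (n + (n + 2 * k)) → Fin (n + (n + 2 * k))) : ℕ → ℕ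
  | 0 => n
  | m + 1 => walk n k f m + (if Dnat n k f (walk n k f m) then 2 else 1)

theorem walk_ge (m : ℕ) : n + m ≤ walk n k f m := by
  induction m with
  | zero => simp [walk]
  | succ m ih =>
    rw [walk]
    split <;> omega

theorem walk_strictMono {m m' : ℕ} (h : m < m') : walk n k f m < walk n k f m' := by
  induction m' with
  | zero => omega
  | succ m' ih =>
    rw [walk]
    rcases Nat.lt_or_ge m m' with h2 | h2
    · have := ih h2; split <;> omega
    · have : m = m' := by omega
      subst this; split <;> omega

theorem walk_le (hg : Good n k f) (m : ℕ) :
    walk n k f m ≤ n + (n + 2 * k) ∨ ∃ m' ≤ m, walk n k f m' = n + (n + 2 * k) := by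
  induction m with
  | zero => left; show n ≤ n + (n + 2 * k); omega
  | succ m ih =>
    rcases ih with hle | ⟨m', hm', hw⟩
    · rcases Nat.lt_or_ge (walk n k f m) (n + (n + 2 * k)) with hlt | hge
      · left
        rw [walk]
        by_cases hD : Dnat n k f (walk n k f m)
        · rw [if_pos hD]
          obtain ⟨p, hp, hq, hfp⟩ := hD
          have := (f p).isLt
          omega
        · rw [if_neg hD]; omega
      · right; exact ⟨m, by omega, by omega⟩
    · right; exact ⟨m', by omega, hw⟩

theorem walk_reaches (hg : Good n k f) : ∃ m, walk n k f m = n + (n + 2 * k) := by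
  rcases walk_le hg (n + 2 * k) with hle | ⟨m', _, hw⟩
  · have := walk_ge (n := n) (k := k) (f := f) (n + 2 * k)
    exact ⟨n + 2 * k, by omega⟩
  · exact ⟨m', hw⟩


noncomputable def m0 (hg : Good n k f) : ℕ := Nat.find (walk_reaches hg)

theorem m0_spec (hg : Good n k f) : walk n k f (m0 hg) = n + (n + 2 * k) :=
  Nat.find_spec (walk_reaches hg)

theorem walk_lt_of_lt_m0 (hg : Good n k f) {m : ℕ} (hm : m < m0 hg) :
    walk n k f m < n + (n + 2 * k) := by
  have hne : walk n k f m ≠ n + (n + 2 * k) := Nat.find_min (walk_reaches hg) hm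
  rcases walk_le hg m with hle | ⟨m', hm', hw⟩
  · omega
  · exfalso
    have : m0 hg ≤ m' := Nat.find_min' (walk_reaches hg) hw
    omega

theorem walk_front (hg : Good n k f) (m : ℕ) (h : n + 1 ≤ walk n k f m) :
    ¬ Dnat n k f (walk n k f m - 1) := by
  induction m with
  | zero => simp only [walk] at h ⊢; omega
  | succ m ih =>
    by_cases hD : Dnat n k f (walk n k f m)
    · have hw : walk n k f (m + 1) = walk n k f m + 2 := by rw [walk, if_pos hD]
      rw [hw]
      have : walk n k f m + 2 - 1 = walk n k f m + 1 := by omega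
      rw [this]
      exact Dnat_sparse hg hD
    · have hw : walk n k f (m + 1) = walk n k f m + 1 := by rw [walk, if_neg hD]
      rw [hw]
      simpa using hD

theorem walk_cov (hg : Good n k f) (m : ℕ) {q : ℕ} (hq : n ≤ q) (hlt : q < walk n k f m) :
    (∃ m' < m, walk n k f m' = q) ∨
    (n + 1 ≤ q ∧ Dnat n k f (q - 1) ∧ ∃ m' < m, walk n k f m' = q - 1) := by
  induction m with
  | zero => simp only [walk] at hlt; omega
  | succ m ih =>
    rcases Nat.lt_or_ge q (walk n k f m) with h2 | h2
    · rcases ih h2 with ⟨m', hm', hw⟩ | ⟨h3, h4, m', hm', hw⟩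
      · exact Or.inl ⟨m', by omega, hw⟩
      · exact Or.inr ⟨h3, h4, m', by omega, hw⟩
    · rcases Nat.eq_or_lt_of_le h2 with heq | h3
      · exact Or.inl ⟨m, by omega, heq⟩
      · -- walk m < q < walk (m+1): must be domino case, q = walk m + 1
        by_cases hD : Dnat n k f (walk n k f m)
        · have hw : walk n k f (m + 1) = walk n k f m + 2 := by rw [walk, if_pos hD]
          rw [hw] at hlt
          have hqe : q = walk n k f m + 1 := by omega
          refine Or.inr ⟨?_, ?_, m, by omega, by omega⟩
          · have := walk_ge (n := n) (k := k) (f := f) m; omega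
          · have : q - 1 = walk n k f m := by omega
            rw [this]; exact hD
        · have hw : walk n k f (m + 1) = walk n k f m + 1 := by rw [walk, if_neg hD]
          omega

theorem walk_leftval (hg : Good n k f) {m : ℕ} (hm : m < m0 hg)
    (hnd : ¬ Dnat n k f (walk n k f m)) (h : walk n k f m < n + (n + 2 * k)) :
    (f ⟨walk n k f m, h⟩ : ℕ) < n := by
  set p : Fin (n + (n + 2 * k)) := ⟨walk n k f m, h⟩ with hp
  have hpn : n ≤ (p : ℕ) := by
    show n ≤ walk n k f m
    have := walk_ge (n := n) (k := k) (f := f) m; omega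
  by_contra hcon
  push_neg at hcon
  rcases Nat.lt_or_ge (p : ℕ) ((f p : ℕ)) with h1 | h1
  · have := hg.adj p hpn hcon h1
    exact hnd ⟨p, rfl, hpn, this⟩
  · have hne := hg.nefix p
    have h2 : (f p : ℕ) < (p : ℕ) := by
      rcases Nat.lt_or_ge (f p : ℕ) (p : ℕ) with h2 | h2
      · exact h2
      · exact absurd (Fin.ext (by omega : ((f p) : ℕ) = (p : ℕ))) hne
    set q := f p with hq
    have hpv : (p : ℕ) = walk n k f m := rfl
    have hqv : (q : ℕ) = (f p : ℕ) := rfl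
    have hfq : f q = p := hg.invol p
    have hfqv : (f q : ℕ) = (p : ℕ) := by rw [hfq]
    have hadj := hg.adj q hcon (by rw [hfqv]; exact hpn) (by rw [hfqv]; exact h2)
    rw [hfqv] at hadj
    -- (p:ℕ) = q + 1, so Dnat (walk m - 1)
    have hfront := walk_front hg m (by omega)
    exact hfront ⟨q, by omega, by omega, by omega⟩

open Classical in
noncomputable def DomCount (n k : ℕ) (f : Fin (n + (n + 2 * k)) → Fin (n + (n + 2 * k)))
    (m : ℕ) : ℕ :=
  ((Finset.range m).filter (fun m' => Dnat n k f (walk n k f m'))).card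

open Classical in
theorem walk_count (m : ℕ) : walk n k f m = n + m + DomCount n k f m := by
  induction m with
  | zero => simp [walk, DomCount]
  | succ m ih =>
    have hr : Finset.range (m + 1) = insert m (Finset.range m) := Finset.range_add_one
    unfold DomCount
    rw [hr, Finset.filter_insert]
    by_cases hD : Dnat n k f (walk n k f m)
    · rw [if_pos hD, Finset.card_insert_of_notMem (by simp)]
      have hw : walk n k f (m + 1) = walk n k f m + 2 := by rw [walk, if_pos hD]
      unfold DomCount at ih
      omega
    · rw [if_neg hD]
      have hw : walk n k f (m + 1) = walk n k f m + 1 := by rw [walk, if_neg hD]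
      unfold DomCount at ih
      omega

open Classical in
theorem sing_count (hg : Good n k f) :
    ((Finset.range (m0 hg)).filter (fun m => ¬ Dnat n k f (walk n k f m))).card = n := by
  conv_rhs => rw [← Finset.card_range n]
  apply Finset.card_bij (fun m hm => (f ⟨walk n k f m,
    walk_lt_of_lt_m0 hg (by simp only [Finset.mem_filter, Finset.mem_range] at hm; exact hm.1)⟩ : ℕ))
  · intro a ha
    simp only [Finset.mem_filter, Finset.mem_range] at ha ⊢
    exact walk_leftval hg ha.1 ha.2 _
  · intro a ha b hb hab
    simp only [Finset.mem_filter, Finset.mem_range] at ha hb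
    have : (⟨walk n k f a, _⟩ : Fin (n + (n + 2 * k))) = ⟨walk n k f b, _⟩ :=
      hg.finj (Fin.ext hab)
    rw [Fin.ext_iff] at this
    simp only at this
    by_contra hne
    rcases Nat.lt_or_ge a b with h | h
    · have := walk_strictMono (n := n) (k := k) (f := f) h; omega
    · have hba : b < a := by omega
      have := walk_strictMono (n := n) (k := k) (f := f) hba; omega
  · intro b hb
    simp only [Finset.mem_range] at hb
    set pb : Fin (n + (n + 2 * k)) := ⟨b, by omega⟩ with hpb
    set p := f pb with hp
    have hpn : n ≤ (p : ℕ) := hg.left pb hb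
    have hfp : f p = pb := hg.invol pb
    have hnd : ¬ Dnat n k f (p : ℕ) := by
      rintro ⟨p', hp', -, hfp'⟩
      have : p' = p := Fin.ext hp'
      rw [this, hfp] at hfp'
      simp only [hpb] at hfp'
      omega
    have hnd' : ¬ (n + 1 ≤ (p : ℕ) ∧ Dnat n k f ((p : ℕ) - 1)) := by
      rintro ⟨hp1, p', hp', hnp', hfp'⟩
      have : f p' = p := Fin.ext (by omega)
      have : p' = f p := by rw [← this, hg.invol]
      rw [hfp] at this
      rw [Fin.ext_iff] at this
      simp only [hpb] at this
      omega
    have hcov := walk_cov hg (m0 hg) hpn (by rw [m0_spec hg]; exact p.isLt)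
    rcases hcov with ⟨m', hm', hw⟩ | ⟨h1, h2, _⟩
    · refine ⟨m', ?_, ?_⟩
      · simp only [Finset.mem_filter, Finset.mem_range]
        refine ⟨hm', ?_⟩
        rw [hw]; exact hnd
      · have : (⟨walk n k f m', walk_lt_of_lt_m0 hg hm'⟩ : Fin (n + (n + 2 * k))) = p :=
          Fin.ext hw
        rw [this, hfp]
    · exact absurd ⟨h1, h2⟩ hnd'

open Classical in
theorem m0_eq (hg : Good n k f) : m0 hg = n + k ∧ DomCount n k f (m0 hg) = k := by
  have h1 := m0_spec hg
  have h2 := walk_count (n := n) (k := k) (f := f) (m0 hg)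
  have h3 := sing_count hg
  have h4 : DomCount n k f (m0 hg) +
      ((Finset.range (m0 hg)).filter (fun m => ¬ Dnat n k f (walk n k f m))).card
      = m0 hg := by
    unfold DomCount
    rw [Finset.card_filter_add_card_filter_not, Finset.card_range]
  unfold DomCount at h2 h4 ⊢
  constructor <;> omega

open Classical in
noncomputable def Sof (n k : ℕ) (f : Fin (n + (n + 2 * k)) → Fin (n + (n + 2 * k))) :
    Finset (Fin (n + k)) :=
  Finset.univ.filter (fun j : Fin (n + k) => Dnat n k f (walk n k f (j : ℕ)))

open Classical in
theorem card_Sof (hg : Good n k f) : (Sof n k f).card = k := by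
  obtain ⟨hm0, hdc⟩ := m0_eq hg
  conv_rhs => rw [← hdc]
  unfold Sof DomCount
  rw [hm0]
  refine Finset.card_bij (fun j _ => (j : ℕ)) ?_ ?_ ?_
  · intro a ha
    simp only [Finset.mem_filter, Finset.mem_univ, true_and] at ha
    simp only [Finset.mem_filter, Finset.mem_range]
    exact ⟨a.isLt, ha⟩
  · intro a _ b _ hab
    exact Fin.ext hab
  · intro b hb
    simp only [Finset.mem_filter, Finset.mem_range] at hb
    exact ⟨⟨b, hb.1⟩, by simp only [Finset.mem_filter, Finset.mem_univ, true_and]; exact hb.2, rfl⟩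

open Classical in
theorem walk_posS (hg : Good n k f) : ∀ m ≤ n + k, walk n k f m = posS n (Sof n k f) m := by
  intro m
  induction m with
  | zero => intro _; simp [walk, posS, aS]
  | succ m ih =>
    intro hm
    have hmlt : m < n + k := hm
    have ih' := ih (by omega)
    have ha := aS_succ (Sof n k f) hmlt
    have hmem : (⟨m, hmlt⟩ : Fin (n + k)) ∈ Sof n k f ↔ Dnat n k f (walk n k f m) := by
      simp [Sof]
    unfold posS at ih' ⊢
    by_cases hD : Dnat n k f (walk n k f m)
    · have hw : walk n k f (m + 1) = walk n k f m + 2 := by rw [walk, if_pos hD]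
      rw [if_pos (hmem.mpr hD)] at ha
      omega
    · have hw : walk n k f (m + 1) = walk n k f m + 1 := by rw [walk, if_neg hD]
      rw [if_neg (fun hc => hD (hmem.mp hc))] at ha
      omega

/-- the domino sets agree -/
theorem domino_eq (hg : Good n k f) (p : Fin (n + (n + 2 * k))) (hn : n ≤ (p : ℕ)) :
    ((fS (Sof n k f) (card_Sof hg) p : ℕ) = (p : ℕ) + 1 ↔ (f p : ℕ) = (p : ℕ) + 1) := by
  rw [fS_domino (Sof n k f) (card_Sof hg) p hn]
  constructor
  · rintro ⟨j, hjS, hj⟩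
    have hD : Dnat n k f (walk n k f (j : ℕ)) := by
      simp only [Sof, Finset.mem_filter, Finset.mem_univ, true_and] at hjS
      exact hjS
    have hwj : walk n k f (j : ℕ) = posS n (Sof n k f) (j : ℕ) :=
      walk_posS hg (j : ℕ) (by have := j.isLt; omega)
    rw [hwj, hj] at hD
    obtain ⟨p', hp', -, hfp'⟩ := hD
    have : p' = p := Fin.ext hp'
    rw [this] at hfp'
    exact hfp'
  · intro hfp
    have hD : Dnat n k f (p : ℕ) := ⟨p, rfl, hn, hfp⟩
    obtain ⟨hm0, -⟩ := m0_eq hg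
    have hcov := walk_cov hg (m0 hg) hn (by rw [m0_spec hg]; exact p.isLt)
    rcases hcov with ⟨m', hm', hw⟩ | ⟨h1, h2, _⟩
    · have hm'lt : m' < n + k := by omega
      refine ⟨⟨m', hm'lt⟩, ?_, ?_⟩
      · simp only [Sof, Finset.mem_filter, Finset.mem_univ, true_and]
        show Dnat n k f (walk n k f m')
        rw [hw]; exact hD
      · have := walk_posS hg m' (by omega)
        simp only [← this]
        omega
    · exfalso
      have := Dnat_sparse hg h2
      have he : (p : ℕ) - 1 + 1 = (p : ℕ) := by omega
      rw [he] at this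
      exact this hD


theorem Good.left_dec (hg : Good n k f) {a b : Fin (n + (n + 2 * k))}
    (hab : (a : ℕ) < (b : ℕ)) (hb : (b : ℕ) < n) : (f b : ℕ) < (f a : ℕ) := by
  have hfa : n ≤ (f a : ℕ) := hg.left a (by omega)
  have hfb : n ≤ (f b : ℕ) := hg.left b hb
  rcases Nat.lt_or_ge ((f b : ℕ)) ((f a : ℕ)) with h | h
  · exact h
  · exfalso
    rcases Nat.eq_or_lt_of_le h with he | h2
    · have : a = b := hg.finj (Fin.ext he)
      omega
    · exact hg.nc a b (by rw [Fin.lt_def]; omega) (by rw [Fin.lt_def]; omega)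
        (by rw [Fin.lt_def]; omega)

theorem Good.classify (hg : Good n k f) (p : Fin (n + (n + 2 * k))) (hn : n ≤ (p : ℕ)) :
    ((f p : ℕ) = (p : ℕ) + 1) ∨ (n + 1 ≤ (p : ℕ) ∧ Dnat n k f ((p : ℕ) - 1)) ∨
    ((f p : ℕ) < n) := by
  rcases Nat.lt_or_ge ((f p : ℕ)) n with hc | hfn
  · exact Or.inr (Or.inr hc)
  · rcases Nat.lt_or_ge ((p : ℕ)) ((f p : ℕ)) with h1 | h1
    · exact Or.inl (hg.adj p hn hfn h1)
    · have hne := hg.nefix p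
      have h2 : (f p : ℕ) < (p : ℕ) := by
        rcases Nat.lt_or_ge (f p : ℕ) (p : ℕ) with h2 | h2
        · exact h2
        · exact absurd (Fin.ext (by omega : ((f p) : ℕ) = (p : ℕ))) hne
      set q := f p with hq
      have hfqv : (f q : ℕ) = (p : ℕ) := by rw [hg.invol]
      have hadj := hg.adj q hfn (by omega) (by omega)
      refine Or.inr (Or.inl ⟨by omega, q, by omega, by omega, by omega⟩)

theorem Good.b_val (hg : Good n k f) {p : Fin (n + (n + 2 * k))}
    (h1 : n + 1 ≤ (p : ℕ)) (h2 : Dnat n k f ((p : ℕ) - 1)) : (f p : ℕ) = (p : ℕ) - 1 := by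
  obtain ⟨p', hp', hn', hfp'⟩ := h2
  have hfp : f p' = p := Fin.ext (by omega)
  have : f p = p' := by rw [← hfp, hg.invol]
  rw [this]; omega

theorem Good.dnat_iff (hg : Good n k f) (p : Fin (n + (n + 2 * k))) (hn : n ≤ (p : ℕ)) :
    Dnat n k f (p : ℕ) ↔ (f p : ℕ) = (p : ℕ) + 1 := by
  constructor
  · rintro ⟨p', hp', -, hfp'⟩
    have : p' = p := Fin.ext hp'
    rw [this] at hfp'
    exact hfp'
  · intro h
    exact ⟨p, rfl, hn, h⟩

/-- two good matchings with the same dominoes are equal -/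
theorem Good.unique (hg : Good n k f) {f' : Fin (n + (n + 2 * k)) → Fin (n + (n + 2 * k))}
    (hg' : Good n k f') (hD : ∀ q : ℕ, Dnat n k f q ↔ Dnat n k f' q) : f = f' := by
  classical
  set R := Finset.univ.filter
    (fun p : Fin (n + (n + 2 * k)) => n ≤ (p : ℕ) ∧ (f p : ℕ) < n) with hR
  set R' := Finset.univ.filter
    (fun p : Fin (n + (n + 2 * k)) => n ≤ (p : ℕ) ∧ (f' p : ℕ) < n) with hR'
  have hchar : ∀ (g : Fin (n + (n + 2 * k)) → Fin (n + (n + 2 * k))), Good n k g →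
      ∀ p : Fin (n + (n + 2 * k)), n ≤ (p : ℕ) → ((g p : ℕ) < n ↔
        (¬ Dnat n k g (p : ℕ) ∧ ¬ (n + 1 ≤ (p : ℕ) ∧ Dnat n k g ((p : ℕ) - 1)))) := by
    intro g hgg p hn
    constructor
    · intro hc
      constructor
      · rw [hgg.dnat_iff p hn]; omega
      · rintro ⟨h1, h2⟩
        have := hgg.b_val h1 h2
        obtain ⟨p', hp', hn', -⟩ := h2
        omega
    · rintro ⟨h1, h2⟩
      rcases hgg.classify p hn with ha | hb | hc
      · exact absurd ((hgg.dnat_iff p hn).mpr ha) h1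
      · exact absurd hb h2
      · exact hc
  have hRR' : R = R' := by
    ext p
    simp only [hR, hR', Finset.mem_filter, Finset.mem_univ, true_and]
    constructor
    · rintro ⟨hn, hc⟩
      refine ⟨hn, ?_⟩
      rw [hchar f' hg' p hn]
      rw [hchar f hg p hn] at hc
      rw [← hD, ← hD]
      exact hc
    · rintro ⟨hn, hc⟩
      refine ⟨hn, ?_⟩
      rw [hchar f hg p hn]
      rw [hchar f' hg' p hn] at hc
      rw [hD, hD]
      exact hc
  have cardR : R.card = n := by
    conv_rhs => rw [← Finset.card_range n]
    refine Finset.card_bij (fun p _ => (f p : ℕ)) ?_ ?_ ?_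
    · intro a ha
      simp only [hR, Finset.mem_filter, Finset.mem_univ, true_and] at ha
      simp only [Finset.mem_range]
      exact ha.2
    · intro a ha b hb hab
      exact hg.finj (Fin.ext hab)
    · intro b hb
      simp only [Finset.mem_range] at hb
      refine ⟨f ⟨b, by omega⟩, ?_, ?_⟩
      · simp only [hR, Finset.mem_filter, Finset.mem_univ, true_and]
        refine ⟨hg.left _ (by simpa using hb), ?_⟩
        rw [hg.invol]
        simpa using hb
      · rw [hg.invol]
  have hn1 : ∀ i : Fin n, n - 1 - (i : ℕ) < n + (n + 2 * k) := by
    intro i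
    have := i.isLt
    omega
  set g : Fin n → Fin (n + (n + 2 * k)) := fun i => f ⟨n - 1 - (i : ℕ), hn1 i⟩ with hgdef
  set g' : Fin n → Fin (n + (n + 2 * k)) := fun i => f' ⟨n - 1 - (i : ℕ), hn1 i⟩ with hgdef'
  have hgmono : StrictMono g := by
    intro i i' hii
    rw [Fin.lt_def] at hii ⊢
    have hi := i.isLt
    have hi' := i'.isLt
    exact hg.left_dec (a := ⟨n - 1 - (i' : ℕ), hn1 i'⟩) (b := ⟨n - 1 - (i : ℕ), hn1 i⟩)
      (by simp only []; omega) (by simp only []; omega)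
  have hgmono' : StrictMono g' := by
    intro i i' hii
    rw [Fin.lt_def] at hii ⊢
    have hi := i.isLt
    have hi' := i'.isLt
    exact hg'.left_dec (a := ⟨n - 1 - (i' : ℕ), hn1 i'⟩) (b := ⟨n - 1 - (i : ℕ), hn1 i⟩)
      (by simp only []; omega) (by simp only []; omega)
  have hgmem : ∀ i : Fin n, g i ∈ R := by
    intro i
    simp only [hR, Finset.mem_filter, Finset.mem_univ, true_and, hgdef]
    have := i.isLt
    refine ⟨hg.left _ (by simp only []; omega), ?_⟩
    rw [hg.invol]
    simp only []
    omega
  have hgmem' : ∀ i : Fin n, g' i ∈ R := by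
    intro i
    rw [hRR']
    simp only [hR', Finset.mem_filter, Finset.mem_univ, true_and, hgdef']
    have := i.isLt
    refine ⟨hg'.left _ (by simp only []; omega), ?_⟩
    rw [hg'.invol]
    simp only []
    omega
  have hgeq : g = g' := by
    rw [Finset.orderEmbOfFin_unique cardR hgmem hgmono,
        Finset.orderEmbOfFin_unique cardR hgmem' hgmono']
  have hleft : ∀ p : Fin (n + (n + 2 * k)), (p : ℕ) < n → f p = f' p := by
    intro p hp
    have hn0 : (n : ℕ) ≥ 1 := by omega
    set i : Fin n := ⟨n - 1 - (p : ℕ), by omega⟩ with hi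
    have h1 : (⟨n - 1 - (i : ℕ), hn1 i⟩ : Fin (n + (n + 2 * k))) = p := by
      apply Fin.ext
      simp only [hi]
      omega
    have h2 := congrFun hgeq i
    simp only [hgdef, hgdef', h1] at h2
    exact h2
  funext p
  rcases Nat.lt_or_ge ((p : ℕ)) n with hp | hp
  · exact hleft p hp
  · rcases hg.classify p hp with ha | ⟨h1, h2⟩ | hc
    · have ha' : (f' p : ℕ) = (p : ℕ) + 1 := by
        rw [← hg'.dnat_iff p hp, ← hD, hg.dnat_iff p hp]
        exact ha
      exact Fin.ext (by omega)
    · have hb := hg.b_val h1 h2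
      have hb' := hg'.b_val h1 ((hD _).mp h2)
      exact Fin.ext (by omega)
    · set q := f p with hq
      have hfq : f q = p := hg.invol p
      have hq' : f' q = p := by rw [← hleft q hc, hfq]
      have : f' p = q := by rw [← hq', hg'.invol]
      rw [this]

end CLMaux

/-- The number of crossingless matchings between `n` left points and `n + 2k`
right points with no left returns and only unnested right returns is `C(n+k, k)`.
(A right return is an arc joining two right points, i.e. two indices `≥ n`;
unnested means no right return lies strictly between the endpoints of another.) -/
theorem card_no_left_unnested_right (n k : ℕ) :
    Fintype.card {d : NCM (n + (n + 2 * k)) //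
        (∀ i : Fin (n + (n + 2 * k)), (i : ℕ) < n → n ≤ ((d.1 i : ℕ))) ∧
        (∀ i j : Fin (n + (n + 2 * k)),
          n ≤ (i : ℕ) → n ≤ ((d.1 i : ℕ)) → n ≤ (j : ℕ) → n ≤ ((d.1 j : ℕ)) →
          i < d.1 i → j < d.1 j → i < j → d.1 j < d.1 i → False)} =
      Nat.choose (n + k) k := by
  classical
  set F : {S : Finset (Fin (n + k)) // S.card = k} →
      {d : NCM (n + (n + 2 * k)) //
        (∀ i : Fin (n + (n + 2 * k)), (i : ℕ) < n → n ≤ ((d.1 i : ℕ))) ∧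
        (∀ i j : Fin (n + (n + 2 * k)),
          n ≤ (i : ℕ) → n ≤ ((d.1 i : ℕ)) → n ≤ (j : ℕ) → n ≤ ((d.1 j : ℕ)) →
          i < d.1 i → j < d.1 j → i < j → d.1 j < d.1 i → False)} :=
    fun S => ⟨⟨CLMaux.fS S.1 S.2,
      CLMaux.fS_invol S.1 S.2, CLMaux.fS_ne S.1 S.2, CLMaux.fS_noncross S.1 S.2⟩,
      CLMaux.fS_left S.1 S.2, CLMaux.fS_unnested S.1 S.2⟩ with hF
  have hbij : Function.Bijective F := by
    constructor
    · intro S S' h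
      apply Subtype.ext
      have h1 : CLMaux.fS S.1 S.2 = CLMaux.fS S'.1 S'.2 := by
        have := congrArg (fun d => (d.1 : NCM (n + (n + 2 * k))).1) h
        simpa [hF] using this
      exact CLMaux.fS_inj S.1 S'.1 S.2 S'.2 h1
    · rintro ⟨⟨f, hf1, hf2, hf3⟩, hf4, hf5⟩
      have hg : CLMaux.Good n k f := ⟨hf1, hf2, hf3, hf4, hf5⟩
      refine ⟨⟨CLMaux.Sof n k f, CLMaux.card_Sof hg⟩, ?_⟩
      apply Subtype.ext
      apply Subtype.ext
      show CLMaux.fS (CLMaux.Sof n k f) (CLMaux.card_Sof hg) = f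
      have hgfS : CLMaux.Good n k (CLMaux.fS (CLMaux.Sof n k f) (CLMaux.card_Sof hg)) :=
        ⟨CLMaux.fS_invol _ _, CLMaux.fS_ne _ _, CLMaux.fS_noncross _ _,
          CLMaux.fS_left _ _, CLMaux.fS_unnested _ _⟩
      apply CLMaux.Good.unique hgfS hg
      intro q
      constructor
      · rintro ⟨p, rfl, hn, hfp⟩
        exact ⟨p, rfl, hn, (CLMaux.domino_eq hg p hn).mp hfp⟩
      · rintro ⟨p, rfl, hn, hfp⟩
        exact ⟨p, rfl, hn, (CLMaux.domino_eq hg p hn).mpr hfp⟩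
  have key : Fintype.card {S : Finset (Fin (n + k)) // S.card = k} =
      Fintype.card {d : NCM (n + (n + 2 * k)) //
        (∀ i : Fin (n + (n + 2 * k)), (i : ℕ) < n → n ≤ ((d.1 i : ℕ))) ∧
        (∀ i j : Fin (n + (n + 2 * k)),
          n ≤ (i : ℕ) → n ≤ ((d.1 i : ℕ)) → n ≤ (j : ℕ) → n ≤ ((d.1 j : ℕ)) →
          i < d.1 i → j < d.1 j → i < j → d.1 j < d.1 i → False)} :=
    Fintype.card_of_bijective hbij
  rw [← key, Fintype.card_finset_len, Fintype.card_fin]
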